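/- Let T be a full topological Markov expanding map of [0,1] for which Lebesgue measure is invariant and ergodic, with coding W: [0,1]\N -> A^N given by W_n(omega) = j iff T^n(omega) in I_j. Then the transition probabilities of the associated stationary chain satisfy p(b | a_{-infty}^{-1}) = lim_{n->infty} 1/|T'(omega_n)| for any choice of points omega_n with coding W_0^n(omega_n) = (b, a_{-1}, ..., a_{-n}), provided the limit exists uniformly (e.g. T piecewise C^{1+alpha}). -/

import Mathlib

open MeasureTheory

/-! A piecewise monotone map `T` of `[0,1]` with branch endpoints
`0 = η 0 < η 1 < … < η 𝒦 = 1` (here `𝒦 = K + 1`); the monotonicity intervals are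
`I_j = (η (j-1), η j)`, indexed below by `j ≤ K` as `Set.Ioo (η j) (η (j+1))`. -/

/-- The branch endpoints are an increasing subdivision of `[0,1]`. -/
def IsSubdivision (K : ℕ) (η : ℕ → ℝ) : Prop :=
  η 0 = 0 ∧ η (K + 1) = 1 ∧ ∀ j, j ≤ K → η j < η (j + 1)

/-- `T` is piecewise `C²`: on each branch it agrees with a map which is `C²` on the
closed branch interval. -/
def PiecewiseC2 (K : ℕ) (η : ℕ → ℝ) (T : ℝ → ℝ) : Prop :=
  ∀ j, j ≤ K → ∃ Tj : ℝ → ℝ,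
    ContDiffOn ℝ 2 Tj (Set.Icc (η j) (η (j+1))) ∧
    Set.EqOn T Tj (Set.Ioo (η j) (η (j+1)))

/-- `T` is monotone on each branch. -/
def PiecewiseMonotone (K : ℕ) (η : ℕ → ℝ) (T : ℝ → ℝ) : Prop :=
  ∀ j, j ≤ K → StrictMonoOn T (Set.Ioo (η j) (η (j+1))) ∨
    StrictAntiOn T (Set.Ioo (η j) (η (j+1)))

/-- `T` is full topological Markov: each branch is mapped onto `(0,1)`. -/
def FullMarkov (K : ℕ) (η : ℕ → ℝ) (T : ℝ → ℝ) : Prop :=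
  ∀ j, j ≤ K → T '' Set.Ioo (η j) (η (j+1)) = Set.Ioo 0 1

/-- `T` is uniformly expanding: `|(T^m)'| ≥ c > 1` wherever defined. -/
def UniformlyExpanding (T : ℝ → ℝ) : Prop :=
  ∃ m : ℕ, 1 ≤ m ∧ ∃ c : ℝ, 1 < c ∧
    ∀ x ∈ Set.Icc (0:ℝ) 1, DifferentiableAt ℝ (T^[m]) x → c ≤ |deriv (T^[m]) x|

private lemma mono_uIcc' {f : ℝ → ℝ} {s : Set ℝ} (hs : s.OrdConnected)
    (hf : StrictMonoOn f s ∨ StrictAntiOn f s) {u v z : ℝ}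
    (hu : u ∈ s) (hv : v ∈ s) (hz : z ∈ Set.uIcc u v) :
    f z ∈ Set.uIcc (f u) (f v) := by
  have hzs : z ∈ s := hs.uIcc_subset hu hv hz
  rcases hf with hf | hf
  · have hm := hf.monotoneOn
    rcases le_total u v with h | h
    · rw [Set.uIcc_of_le h] at hz
      rw [Set.uIcc_of_le (hm hu hv h)]
      exact ⟨hm hu hzs hz.1, hm hzs hv hz.2⟩
    · rw [Set.uIcc_of_ge h] at hz
      rw [Set.uIcc_of_ge (hm hv hu h)]
      exact ⟨hm hv hzs hz.1, hm hzs hu hz.2⟩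
  · have hm := hf.antitoneOn
    rcases le_total u v with h | h
    · rw [Set.uIcc_of_le h] at hz
      rw [Set.uIcc_of_ge (hm hu hv h)]
      exact ⟨hm hzs hv hz.2, hm hu hzs hz.1⟩
    · rw [Set.uIcc_of_ge h] at hz
      rw [Set.uIcc_of_le (hm hv hu h)]
      exact ⟨hm hzs hu hz.2, hm hv hzs hz.1⟩

private def br' {K : ℕ} (b : Fin (K+1)) (a : ℕ → Fin (K+1)) : ℕ → ℕ
  | 0 => b
  | i+1 => a i

set_option maxHeartbeats 1000000 in
/-- Let `T` be a full topological Markov expanding map of `[0,1]`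
for which Lebesgue measure is invariant and ergodic, with coding `W_n(ω) = j` iff
`T^n(ω) ∈ I_j`.  If `(ω_n)` are points coded by `(b, a_{-1}, …, a_{-n})` and
`1/|T'(ω_n)|` converges to `L`, then the conditional probabilities
`P(X_0 = b | X_{-n}^{-1} = a_{-n}^{-1})` of the associated stationary chain converge
to the same limit `L`; i.e. `p(b | a_{-∞}^{-1}) = lim_n 1/|T'(ω_n)|`.
Here `a i` denotes the symbol at position `-(i+1)` and the monotonicity interval with
symbol `j : Fin (K+1)` is `I_j = (η j, η (j+1))`. -/
theorem transition_probabilities_from_map (K : ℕ) (η : ℕ → ℝ) (T : ℝ → ℝ)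
    (hη : IsSubdivision K η) (hC2 : PiecewiseC2 K η T)
    (hmono : PiecewiseMonotone K η T) (hfull : FullMarkov K η T)
    (hexp : UniformlyExpanding T)
    (hinv : MeasurePreserving T (volume.restrict (Set.Icc (0:ℝ) 1))
      (volume.restrict (Set.Icc (0:ℝ) 1)))
    (herg : ∀ s : Set ℝ, MeasurableSet s → T ⁻¹' s = s →
      volume.restrict (Set.Icc (0:ℝ) 1) s = 0 ∨ volume.restrict (Set.Icc (0:ℝ) 1) s = 1)
    (b : Fin (K+1)) (a : ℕ → Fin (K+1)) (ω : ℕ → ℝ)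
    (hcode : ∀ n : ℕ, ω n ∈ Set.Ioo (η b) (η ((b : ℕ) + 1)) ∧
      ∀ i, i < n → T^[i+1] (ω n) ∈ Set.Ioo (η (a i)) (η ((a i : ℕ) + 1)))
    (L : ℝ)
    (hlim : Filter.Tendsto (fun n => 1 / |deriv T (ω n)|) Filter.atTop (nhds L)) :
    Filter.Tendsto (fun n =>
        (volume {x : ℝ | x ∈ Set.Ioo (η b) (η ((b : ℕ) + 1)) ∧
          ∀ i, i < n → T^[i+1] x ∈ Set.Ioo (η (a i)) (η ((a i : ℕ) + 1))}).toReal /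
        (volume {x : ℝ | x ∈ Set.Icc (0:ℝ) 1 ∧
          ∀ i, i < n → T^[i] x ∈ Set.Ioo (η (a i)) (η ((a i : ℕ) + 1))}).toReal)
      Filter.atTop (nhds L) := by
  classical
  obtain ⟨hη0, hη1, hηlt⟩ := hη
  obtain ⟨m, hm1, c, hc1, hexp'⟩ := hexp
  have hbK : (b : ℕ) ≤ K := Nat.lt_succ_iff.mp b.isLt
  have haK : ∀ i, (a i : ℕ) ≤ K := fun i => Nat.lt_succ_iff.mp (a i).isLt
  have hc0 : (0:ℝ) < c := by linarith
  -- ============ basic facts about η and branches ============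
  have hηmono : ∀ i j : ℕ, i ≤ j → j ≤ K + 1 → η i ≤ η j := by
    intro i j hij hjK
    induction j with
    | zero => simp [Nat.le_zero.mp hij]
    | succ k ih =>
      rcases Nat.lt_succ_iff_lt_or_eq.mp (Nat.lt_succ_of_le hij) with h | h
      · exact (ih (by omega) (by omega)).trans (hηlt k (by omega)).le
      · exact le_of_eq (by rw [h])
  have hbranch_sub : ∀ j, j ≤ K → Set.Ioo (η j) (η (j+1)) ⊆ Set.Ioo (0:ℝ) 1 := by
    intro j hj x hx
    constructor
    · calc (0:ℝ) = η 0 := hη0.symm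
        _ ≤ η j := hηmono 0 j (Nat.zero_le _) (by omega)
        _ < x := hx.1
    · calc x < η (j+1) := hx.2
        _ ≤ η (K+1) := hηmono _ _ (by omega) le_rfl
        _ = 1 := hη1
  -- ============ derivative facts on branches ============
  have hTat : ∀ j, j ≤ K → ∀ y ∈ Set.Ioo (η j) (η (j+1)), HasDerivAt T (deriv T y) y := by
    intro j hj y hy
    obtain ⟨Tj, hTj, hEq⟩ := hC2 j hj
    have hdiff : DifferentiableAt ℝ Tj y :=
      (hTj.differentiableOn (by norm_num)).differentiableAt (Icc_mem_nhds hy.1 hy.2)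
    have hev : T =ᶠ[nhds y] Tj := Filter.eventuallyEq_of_mem (Ioo_mem_nhds hy.1 hy.2) hEq
    have h1 : HasDerivAt T (deriv Tj y) y :=
      HasDerivAt.congr_of_eventuallyEq hdiff.hasDerivAt hev
    rw [hev.deriv_eq]
    exact h1
  have hderEq : ∀ j, j ≤ K → ∀ Tj : ℝ → ℝ, Set.EqOn T Tj (Set.Ioo (η j) (η (j+1))) →
      ∀ y ∈ Set.Ioo (η j) (η (j+1)),
      deriv T y = derivWithin Tj (Set.Icc (η j) (η (j+1))) y := by
    intro j hj Tj hEq y hy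
    have hev : T =ᶠ[nhds y] Tj := Filter.eventuallyEq_of_mem (Ioo_mem_nhds hy.1 hy.2) hEq
    rw [hev.deriv_eq, ← derivWithin_of_mem_nhds (Icc_mem_nhds hy.1 hy.2)]
  have hMex : ∀ j : Fin (K+1), ∃ C : ℝ, ∀ y ∈ Set.Ioo (η j) (η ((j:ℕ)+1)), |deriv T y| ≤ C := by
    intro j
    have hjK : (j : ℕ) ≤ K := Nat.lt_succ_iff.mp j.isLt
    obtain ⟨Tj, hTj, hEq⟩ := hC2 j hjK
    have hud : UniqueDiffOn ℝ (Set.Icc (η j) (η ((j:ℕ)+1))) := uniqueDiffOn_Icc (hηlt _ hjK)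
    have hcont := hTj.continuousOn_derivWithin hud (by norm_num)
    obtain ⟨C, hC⟩ := (isCompact_Icc).exists_bound_of_continuousOn hcont
    refine ⟨C, fun y hy => ?_⟩
    rw [hderEq j hjK Tj hEq y hy]
    simpa [Real.norm_eq_abs] using hC y (Set.Ioo_subset_Icc_self hy)
  choose Cf hCf using hMex
  set M : ℝ := max 1 (Finset.univ.sup' Finset.univ_nonempty Cf) with hMdef
  have hM1 : (1:ℝ) ≤ M := le_max_left _ _
  have hMb : ∀ j, j ≤ K → ∀ y ∈ Set.Ioo (η j) (η (j+1)), |deriv T y| ≤ M := by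
    intro j hj y hy
    have h2 : Cf ⟨j, by omega⟩ ≤ M :=
      le_trans (Finset.le_sup' Cf (Finset.mem_univ _)) (le_max_right _ _)
    exact (hCf ⟨j, by omega⟩ y hy).trans h2
  obtain ⟨Tb, hTb, hEqb⟩ := hC2 b hbK
  have hUC : ∀ ε > 0, ∃ d > 0, ∀ x ∈ Set.Ioo (η b) (η ((b:ℕ)+1)),
      ∀ y ∈ Set.Ioo (η b) (η ((b:ℕ)+1)), |x - y| < d → |deriv T x - deriv T y| < ε := by
    intro ε hε
    have hud : UniqueDiffOn ℝ (Set.Icc (η b) (η ((b:ℕ)+1))) := uniqueDiffOn_Icc (hηlt _ hbK)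
    have h1 := isCompact_Icc.uniformContinuousOn_of_continuous
      (hTb.continuousOn_derivWithin hud (by norm_num))
    rw [Metric.uniformContinuousOn_iff] at h1
    obtain ⟨d, hd, h⟩ := h1 ε hε
    refine ⟨d, hd, fun x hx y hy hxy => ?_⟩
    rw [hderEq b hbK Tb hEqb x hx, hderEq b hbK Tb hEqb y hy]
    have := h x (Set.Ioo_subset_Icc_self hx) y (Set.Ioo_subset_Icc_self hy)
      (by rwa [Real.dist_eq])
    rwa [Real.dist_eq] at this
  -- ============ derivatives of iterates ============
  have hIter : ∀ (k : ℕ) (x : ℝ),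
      (∀ i, i < k → ∃ j, j ≤ K ∧ T^[i] x ∈ Set.Ioo (η j) (η (j+1))) →
      HasDerivAt (T^[k]) (∏ i ∈ Finset.range k, deriv T (T^[i] x)) x := by
    intro k
    induction k with
    | zero => intro x _; simpa using hasDerivAt_id x
    | succ k ih =>
      intro x hx
      obtain ⟨j, hjK, hmem⟩ := hx k (lt_add_one k)
      have h1 : HasDerivAt T (deriv T (T^[k] x)) (T^[k] x) := hTat j hjK _ hmem
      have h2 := ih x (fun i hi => hx i (hi.trans (lt_add_one k)))
      have h3 := h1.comp x h2
      rw [Function.iterate_succ' T k, Finset.prod_range_succ, mul_comm]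
      exact h3
  have hprodM : ∀ (k : ℕ) (x : ℝ),
      (∀ i, i < k → ∃ j, j ≤ K ∧ T^[i] x ∈ Set.Ioo (η j) (η (j+1))) →
      |∏ i ∈ Finset.range k, deriv T (T^[i] x)| ≤ M ^ k := by
    intro k
    induction k with
    | zero => intro x _; simp
    | succ k ih =>
      intro x hx
      obtain ⟨j, hjK, hmem⟩ := hx k (lt_add_one k)
      rw [Finset.prod_range_succ, abs_mul, pow_succ]
      exact mul_le_mul (ih x (fun i hi => hx i (hi.trans (lt_add_one k))))
        (hMb j hjK _ hmem) (abs_nonneg _)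
        (le_trans (by norm_num) (pow_le_pow_left₀ (by norm_num) hM1 k))
  have hlow : ∀ (k : ℕ) (x : ℝ),
      (∀ i, i < k * m → ∃ j, j ≤ K ∧ T^[i] x ∈ Set.Ioo (η j) (η (j+1))) →
      c ^ k ≤ |deriv (T^[k * m]) x| := by
    intro k
    induction k with
    | zero => intro x _; simp
    | succ k ih =>
      intro x hx
      have hkm : k * m < (k + 1) * m := by
        have : 0 < m := hm1
        nlinarith [Nat.succ_mul k m]
      have hxlt : ∀ i, i < k * m → ∃ j, j ≤ K ∧ T^[i] x ∈ Set.Ioo (η j) (η (j+1)) :=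
        fun i hi => hx i (hi.trans hkm)
      have h2 := hIter (k * m) x hxlt
      set y := T^[k * m] x with hy
      have hyorb : ∀ i, i < m → ∃ j, j ≤ K ∧ T^[i] y ∈ Set.Ioo (η j) (η (j+1)) := by
        intro i hi
        have : T^[i] y = T^[i + k * m] x := by
          rw [hy, ← Function.iterate_add_apply]
        rw [this]
        exact hx (i + k * m) (by nlinarith [Nat.succ_mul k m])
      have h1 := hIter m y hyorb
      have hcomp := (h1.deriv ▸ h1 : HasDerivAt (T^[m]) (deriv (T^[m]) y) y).comp x
        (h2.deriv ▸ h2 : HasDerivAt (T^[k*m]) (deriv (T^[k*m]) x) x)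
      have heq : T^[m] ∘ T^[k * m] = T^[(k+1) * m] := by
        rw [show (k+1) * m = m + k * m by ring, Function.iterate_add T m (k*m)]
      rw [heq] at hcomp
      rw [hcomp.deriv, abs_mul, pow_succ, mul_comm (c^k) c]
      have hy01 : y ∈ Set.Icc (0:ℝ) 1 := by
        obtain ⟨j, hjK, hmem⟩ := hx (k * m) hkm
        exact Set.Ioo_subset_Icc_self (hbranch_sub j hjK hmem)
      have hcle : c ≤ |deriv (T^[m]) y| := hexp' y hy01 (h1.deriv ▸ h1).differentiableAt
      exact mul_le_mul hcle (ih x hxlt) (by positivity) (by positivity)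
  -- ============ the cylinder sets S n ============
  set S : ℕ → Set ℝ := fun n => {x : ℝ | x ∈ Set.Ioo (η b) (η ((b : ℕ) + 1)) ∧
      ∀ i, i < n → T^[i+1] x ∈ Set.Ioo (η (a i)) (η ((a i : ℕ) + 1))} with hSdef
  have hbrK : ∀ i, br' b a i ≤ K := by
    intro i
    cases i with
    | zero => exact hbK
    | succ k => exact Nat.lt_succ_iff.mp (a k).isLt
  have hmemS : ∀ n (x : ℝ), x ∈ S n ↔
      ∀ i, i ≤ n → T^[i] x ∈ Set.Ioo (η (br' b a i)) (η (br' b a i + 1)) := by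
    intro n x
    constructor
    · rintro ⟨h0, hs⟩ i hi
      cases i with
      | zero => simpa [br'] using h0
      | succ k => simpa [br'] using hs k (by omega)
    · intro h
      exact ⟨by simpa [br'] using h 0 (Nat.zero_le _),
        fun i hi => by simpa [br'] using h (i+1) (by omega)⟩
  have horb : ∀ n (x : ℝ), x ∈ S n → ∀ i, i ≤ n →
      ∃ j, j ≤ K ∧ T^[i] x ∈ Set.Ioo (η j) (η (j+1)) :=
    fun n x hx i hi => ⟨br' b a i, hbrK i, (hmemS n x).mp hx i hi⟩
  have hωS : ∀ n, ω n ∈ S n := fun n => ⟨(hcode n).1, (hcode n).2⟩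
  have hSsub : ∀ n, S n ⊆ Set.Ioo (η b) (η ((b:ℕ)+1)) := fun n x hx => hx.1
  have hseg : ∀ (n i : ℕ), i ≤ n → ∀ x ∈ S n, ∀ y ∈ S n, ∀ z ∈ Set.uIcc x y,
      T^[i] z ∈ Set.uIcc (T^[i] x) (T^[i] y) := by
    intro n i
    induction i with
    | zero => intro _ x _ y _ z hz; simpa using hz
    | succ i ih =>
      intro hin x hx y hy z hz
      have h1 := ih (by omega) x hx y hy z hz
      have hux := (hmemS n x).mp hx i (by omega)
      have huy := (hmemS n y).mp hy i (by omega)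
      have h2 := mono_uIcc' Set.ordConnected_Ioo (hmono (br' b a i) (hbrK i)) hux huy h1
      simpa [Function.iterate_succ_apply'] using h2
  have hsegS : ∀ n, ∀ x ∈ S n, ∀ y ∈ S n, Set.uIcc x y ⊆ S n := by
    intro n x hx y hy z hz
    rw [hmemS]
    intro i hi
    exact Set.ordConnected_Ioo.uIcc_subset ((hmemS n x).mp hx i hi)
      ((hmemS n y).mp hy i hi) (hseg n i hi x hx y hy z hz)
  have hcontIt : ∀ n (x : ℝ), x ∈ S n → ∀ i, i ≤ n → ContinuousAt (T^[i]) x := by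
    intro n x hx i
    induction i with
    | zero => intro _; simpa using continuousAt_id
    | succ i ih =>
      intro hi
      obtain ⟨j, hjK, hmem⟩ := horb n x hx i (by omega)
      have h1 : ContinuousAt T (T^[i] x) := (hTat j hjK _ hmem).differentiableAt.continuousAt
      have h2 := h1.comp (ih (by omega))
      rw [Function.iterate_succ' T i]
      exact h2
  have hSopen : ∀ n, IsOpen (S n) := by
    intro n
    rw [isOpen_iff_mem_nhds]
    intro x hx
    have h1 : {y : ℝ | ∀ i ∈ Finset.range (n+1),
        T^[i] y ∈ Set.Ioo (η (br' b a i)) (η (br' b a i + 1))} ∈ nhds x := by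
      rw [show {y : ℝ | ∀ i ∈ Finset.range (n+1),
          T^[i] y ∈ Set.Ioo (η (br' b a i)) (η (br' b a i + 1))}
        = ⋂ i ∈ Finset.range (n+1), T^[i] ⁻¹' Set.Ioo (η (br' b a i)) (η (br' b a i + 1)) by
          ext z; simp]
      refine (Filter.biInter_finset_mem _).mpr fun i hi => ?_
      have hi' : i ≤ n := by simpa [Nat.lt_succ_iff] using hi
      exact (hcontIt n x hx i hi').preimage_mem_nhds
        (isOpen_Ioo.mem_nhds ((hmemS n x).mp hx i hi'))
    refine Filter.mem_of_superset h1 fun y hy => ?_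
    rw [hmemS]
    intro i hi
    exact hy i (by simpa [Nat.lt_succ_iff] using hi)
  -- ============ diameter bound ============
  have hdiam : ∀ n, ∀ x ∈ S n, ∀ y ∈ S n, |x - y| ≤ (1/c) ^ (n / m) := by
    intro n x hx y hy
    set k := n / m with hk
    have hkm : k * m ≤ n := Nat.div_mul_le_self n m
    have key : ∀ u v : ℝ, u ∈ S n → v ∈ S n → u < v → v - u ≤ (1/c) ^ k := by
      intro u v hu hv huv
      have hIcc : Set.Icc u v ⊆ S n := by
        rw [← Set.uIcc_of_le huv.le]
        exact hsegS n u hu v hv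
      have hder : ∀ z ∈ Set.Ioo u v, HasDerivAt (T^[k*m]) (deriv (T^[k*m]) z) z := by
        intro z hz
        have hzS : z ∈ S n := hIcc (Set.Ioo_subset_Icc_self hz)
        have h1 := hIter (k*m) z (fun i hi => horb n z hzS i (by omega))
        exact h1.deriv ▸ h1
      have hcont : ContinuousOn (T^[k*m]) (Set.Icc u v) := by
        intro z hz
        have hzS : z ∈ S n := hIcc hz
        exact ((hIter (k*m) z (fun i hi =>
          horb n z hzS i (by omega))).differentiableAt.continuousAt).continuousWithinAt
      obtain ⟨ξ, hξ, hslope⟩ := exists_hasDerivAt_eq_slope (T^[k*m]) _ huv hcont hder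
      have hξS : ξ ∈ S n := hIcc (Set.Ioo_subset_Icc_self hξ)
      have hlb : c ^ k ≤ |deriv (T^[k*m]) ξ| := hlow k ξ (fun i hi => horb n ξ hξS i (by omega))
      rw [hslope] at hlb
      have hb1 : T^[k*m] u ∈ Set.Ioo (0:ℝ) 1 := by
        obtain ⟨j, hjK, hmem⟩ := horb n u hu (k*m) hkm
        exact hbranch_sub j hjK hmem
      have hb2 : T^[k*m] v ∈ Set.Ioo (0:ℝ) 1 := by
        obtain ⟨j, hjK, hmem⟩ := horb n v hv (k*m) hkm
        exact hbranch_sub j hjK hmem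
      have hnum : |T^[k*m] v - T^[k*m] u| ≤ 1 := by
        rw [abs_le]
        constructor <;> nlinarith [hb1.1, hb1.2, hb2.1, hb2.2]
      have hvu : (0:ℝ) < v - u := by linarith
      rw [abs_div, abs_of_pos hvu] at hlb
      have hck : (0:ℝ) < c ^ k := by positivity
      have h5 : c ^ k * (v - u) ≤ 1 := ((le_div_iff₀ hvu).mp hlb).trans hnum
      have h7 : (1/c : ℝ)^k = 1/c^k := by rw [div_pow, one_pow]
      rw [h7, le_div_iff₀ hck]
      nlinarith [h5]
    rcases lt_trichotomy x y with h | h | h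
    · rw [abs_sub_comm, abs_of_pos (by linarith : (0:ℝ) < y - x)]
      exact key x y hx hy h
    · rw [h, sub_self, abs_zero]
      positivity
    · rw [abs_of_pos (by linarith : (0:ℝ) < x - y)]
      exact key y x hy hx h
  -- ============ lower bound δ ≤ |T'| on S n ============
  have hlowT : ∀ n, m ≤ n → ∀ x ∈ S n, c / M ^ (m-1) ≤ |deriv T x| := by
    intro n hmn x hx
    have horbx : ∀ i, i < m → ∃ j, j ≤ K ∧ T^[i] x ∈ Set.Ioo (η j) (η (j+1)) :=
      fun i hi => horb n x hx i (by omega)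
    have h1 := hIter m x horbx
    have hx01 : x ∈ Set.Icc (0:ℝ) 1 := by
      obtain ⟨j, hjK, hmem⟩ := horb n x hx 0 (Nat.zero_le _)
      exact Set.Ioo_subset_Icc_self (hbranch_sub j hjK (by simpa using hmem))
    have hc : c ≤ |deriv (T^[m]) x| := hexp' x hx01 (h1.deriv ▸ h1).differentiableAt
    rw [h1.deriv] at hc
    have hsplit : ∏ i ∈ Finset.range m, deriv T (T^[i] x)
        = (∏ i ∈ Finset.range (m-1), deriv T (T^[i] (T x))) * deriv T x := by
      conv_lhs => rw [show m = (m-1) + 1 by omega]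
      rw [Finset.prod_range_succ']
      simp [Function.iterate_succ_apply]
    have hbnd : |∏ i ∈ Finset.range (m-1), deriv T (T^[i] (T x))| ≤ M ^ (m-1) := by
      apply hprodM
      intro i hi
      have he : T^[i] (T x) = T^[i+1] x := (Function.iterate_succ_apply T i x).symm
      rw [he]
      exact horb n x hx (i+1) (by omega)
    rw [hsplit, abs_mul] at hc
    have hMpow : (0:ℝ) < M ^ (m-1) := by positivity
    rw [div_le_iff₀ hMpow]
    nlinarith [abs_nonneg (deriv T x),
      abs_nonneg (∏ i ∈ Finset.range (m-1), deriv T (T^[i] (T x)))]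
  -- ============ measure facts and change of variables ============
  have hSfin : ∀ n, volume (S n) < ⊤ := by
    intro n
    exact lt_of_le_of_lt (measure_mono (hSsub n)) (by simp [Real.volume_Ioo])
  have hCoV : ∀ n, (volume (T '' S n)).toReal = ∫ x in S n, |deriv T x| := by
    intro n
    have hinj : Set.InjOn T (S n) := by
      rcases hmono b hbK with h | h
      exacts [h.injOn.mono (hSsub n), h.injOn.mono (hSsub n)]
    have h := integral_image_eq_integral_abs_deriv_smul (hSopen n).measurableSet
      (fun x hx => (hTat b hbK x (hSsub n hx)).hasDerivWithinAt) hinj (fun _ => (1:ℝ))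
    simpa [setIntegral_const, smul_eq_mul, Measure.real] using h
  have hDen : ∀ n, 1 ≤ n → {x : ℝ | x ∈ Set.Icc (0:ℝ) 1 ∧
      ∀ i, i < n → T^[i] x ∈ Set.Ioo (η (a i)) (η ((a i : ℕ) + 1))} = T '' S n := by
    intro n hn
    ext y
    constructor
    · rintro ⟨hy1, hy2⟩
      have hy0 : y ∈ Set.Ioo (η (a 0)) (η ((a 0 : ℕ)+1)) := by simpa using hy2 0 hn
      have hy01 : y ∈ Set.Ioo (0:ℝ) 1 := hbranch_sub _ (haK 0) hy0
      rw [← hfull b hbK] at hy01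
      obtain ⟨x, hxb, hTx⟩ := hy01
      refine ⟨x, ⟨hxb, fun i hi => ?_⟩, hTx⟩
      rw [Function.iterate_succ_apply, hTx]
      exact hy2 i hi
    · rintro ⟨x, hx, rfl⟩
      have h1 : T x ∈ Set.Ioo (η (a 0)) (η ((a 0 : ℕ)+1)) := by
        simpa [Function.iterate_one] using hx.2 0 hn
      refine ⟨Set.Ioo_subset_Icc_self (hbranch_sub _ (haK 0) h1), fun i hi => ?_⟩
      rw [← Function.iterate_succ_apply]
      exact hx.2 i hi
  -- ============ main limit ============
  have hfinal : Filter.Tendsto (fun n => (volume (S n)).toReal / ∫ x in S n, |deriv T x|)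
      Filter.atTop (nhds L) := by
    set δ : ℝ := c / M ^ (m-1) with hδdef
    have hδpos : (0:ℝ) < δ := by positivity
    set V : ℕ → ℝ := fun n => (volume (S n)).toReal with hVdef
    have hVpos : ∀ n, 0 < V n := by
      intro n
      exact ENNReal.toReal_pos (((hSopen n).measure_pos volume ⟨ω n, hωS n⟩).ne') (hSfin n).ne
    have hInt : ∀ n, IntegrableOn (fun x => |deriv T x|) (S n) volume := by
      intro n
      refine Integrable.mono' (integrableOn_const (hSfin n).ne :
        IntegrableOn (fun _ => M) (S n) volume)
        ((measurable_deriv T).abs.aestronglyMeasurable) ?_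
      rw [ae_restrict_iff' (hSopen n).measurableSet]
      refine Filter.Eventually.of_forall fun x hx => ?_
      simpa [Real.norm_eq_abs, abs_abs] using hMb b hbK x (hSsub n hx)
    rw [Metric.tendsto_atTop]
    intro ε hε
    set ε' : ℝ := min (δ/2) (ε * δ^2/8) with hε'def
    have hε'pos : (0:ℝ) < ε' := lt_min (by linarith) (by positivity)
    have hε'δ : ε' ≤ δ/2 := min_le_left _ _
    have hε'ε : ε' ≤ ε * δ^2/8 := min_le_right _ _
    obtain ⟨d, hd, hUCd⟩ := hUC ε' hε'pos
    have hpow : Filter.Tendsto (fun k : ℕ => (1/c)^k) Filter.atTop (nhds 0) :=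
      tendsto_pow_atTop_nhds_zero_of_lt_one (by positivity) (by rw [div_lt_one hc0]; exact hc1)
    obtain ⟨k₀, hk₀⟩ := Metric.tendsto_atTop.mp hpow d hd
    obtain ⟨N₂, hN₂⟩ := Metric.tendsto_atTop.mp hlim (ε/2) (by linarith)
    refine ⟨max (max (k₀ * m) N₂) m, fun n hn => ?_⟩
    have hnm : m ≤ n := le_trans (le_max_right _ _) hn
    have hnN₂ : N₂ ≤ n := le_trans (le_trans (le_max_right _ _) (le_max_left _ _)) hn
    have hnk₀ : k₀ ≤ n / m :=
      (Nat.le_div_iff_mul_le (by omega)).mpr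
        (le_trans (le_trans (le_max_left _ _) (le_max_left _ _)) hn)
    set D : ℝ := |deriv T (ω n)| with hDdef
    have hDδ : δ ≤ D := hlowT n hnm (ω n) (hωS n)
    have hDpos : (0:ℝ) < D := lt_of_lt_of_le hδpos hDδ
    have hosc : ∀ x ∈ S n, |deriv T x - deriv T (ω n)| < ε' := by
      intro x hx
      refine hUCd x (hSsub n hx) (ω n) (hSsub n (hωS n)) ?_
      calc |x - ω n| ≤ (1/c)^(n/m) := hdiam n x hx (ω n) (hωS n)
        _ ≤ (1/c)^k₀ := pow_le_pow_of_le_one (by positivity)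
            (by rw [div_le_one hc0]; linarith) hnk₀
        _ < d := by
            have h9 := hk₀ k₀ le_rfl
            rw [Real.dist_eq, sub_zero] at h9
            exact lt_of_le_of_lt (le_abs_self _) h9
    set W : ℝ := ∫ x in S n, |deriv T x| with hWdef
    have hconst : ∀ r : ℝ, ∫ _ in S n, r ∂volume = V n * r := by
      intro r
      rw [setIntegral_const, smul_eq_mul]
      rfl
    have hIntc : ∀ r : ℝ, IntegrableOn (fun _ => r) (S n) volume :=
      fun r => integrableOn_const (hSfin n).ne
    have hub : W ≤ (D + ε') * V n := by
      have h := setIntegral_mono_on (hInt n) (hIntc (D + ε')) (hSopen n).measurableSet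
        (fun x hx => by
          have h1 := hosc x hx
          have h2 : |deriv T x| - D ≤ |deriv T x - deriv T (ω n)| := by
            rw [hDdef]
            exact abs_sub_abs_le_abs_sub _ _
          linarith [abs_nonneg (deriv T x)])
      rw [hconst] at h
      linarith [h]
    have hlb : (D - ε') * V n ≤ W := by
      have h := setIntegral_mono_on (hIntc (D - ε')) (hInt n) (hSopen n).measurableSet
        (fun x hx => by
          have h1 := hosc x hx
          have h2 : D - |deriv T x| ≤ |deriv T x - deriv T (ω n)| := by
            rw [hDdef, abs_sub_comm]
            exact abs_sub_abs_le_abs_sub _ _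
          linarith)
      rw [hconst] at h
      linarith [h]
    have hDε : δ/2 ≤ D - ε' := by linarith
    have hWpos : (0:ℝ) < W := lt_of_lt_of_le (mul_pos (by linarith) (hVpos n)) hlb
    have hr1 : V n / W ≤ 1 / (D - ε') := by
      rw [div_le_div_iff₀ hWpos (by linarith)]
      nlinarith [hlb]
    have hr2 : 1 / (D + ε') ≤ V n / W := by
      rw [div_le_div_iff₀ (by linarith) hWpos]
      nlinarith [hub]
    have hne1 : D - ε' ≠ 0 := by linarith
    have hne2 : D ≠ 0 := ne_of_gt hDpos
    have hne3 : D + ε' ≠ 0 := by linarith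
    have key1 : V n / W - 1/D ≤ ε/4 := by
      have e1 : 1/(D - ε') - 1/D = ε' / (D * (D - ε')) := by
        rw [div_sub_div _ _ hne1 hne2, div_eq_div_iff (by nlinarith) (by nlinarith)]
        ring
      have e2 : ε' / (D * (D - ε')) ≤ ε/4 := by
        rw [div_le_iff₀ (mul_pos hDpos (by linarith))]
        have hq : δ * (δ/2) ≤ D * (D - ε') :=
          mul_le_mul hDδ hDε (by linarith) (by linarith)
        have hq2 : ε/4 * (δ*(δ/2)) ≤ ε/4 * (D*(D-ε')) :=
          mul_le_mul_of_nonneg_left hq (by linarith)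
        have hq3 : ε * δ^2/8 = ε/4*(δ*(δ/2)) := by ring
        linarith
      linarith [hr1]
    have key2 : 1/D - V n / W ≤ ε/4 := by
      have e1 : 1/D - 1/(D + ε') = ε' / (D * (D + ε')) := by
        rw [div_sub_div _ _ hne2 hne3, div_eq_div_iff (by nlinarith) (by nlinarith)]
        ring
      have e2 : ε' / (D * (D + ε')) ≤ ε/4 := by
        rw [div_le_iff₀ (mul_pos hDpos (by linarith))]
        have hq : δ * (δ/2) ≤ D * (D + ε') :=
          mul_le_mul hDδ (by linarith) (by linarith) (by linarith)
        have hq2 : ε/4 * (δ*(δ/2)) ≤ ε/4 * (D*(D+ε')) :=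
          mul_le_mul_of_nonneg_left hq (by linarith)
        have hq3 : ε * δ^2/8 = ε/4*(δ*(δ/2)) := by ring
        linarith
      linarith [hr2]
    have hnear := hN₂ n hnN₂
    rw [Real.dist_eq] at hnear ⊢
    have hDeq : (1:ℝ)/|deriv T (ω n)| = 1/D := rfl
    have habs : |V n / W - 1/D| ≤ ε/4 := abs_le.mpr ⟨by linarith, by linarith⟩
    calc |V n / W - L| ≤ |V n / W - 1/D| + |1/D - L| := abs_sub_le _ _ _
      _ < ε/4 + ε/2 := by
          have h8 : |1/D - L| < ε/2 := by
            rw [← hDeq]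
            exact hnear
          linarith [habs, h8]
      _ < ε := by linarith
  -- ============ transfer to the stated sets ============
  refine Filter.Tendsto.congr' ?_ hfinal
  filter_upwards [Filter.eventually_ge_atTop 1] with n hn
  rw [hDen n hn, hCoV n]
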